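/- Let ξ be a real random variable on a probability space with |ξ| ≤ C almost surely for some constant C, E[ξ] = 0 and E[ξ²] = 1. Then for every u ∈ ℝ and t > 0, the sequence n ↦ (E[exp(u·√(t/n)·ξ)])ⁿ converges, as n → ∞, to exp(u²·t/2). -/

import Mathlib

open MeasureTheory Filter

/-- Let `ξ` be a bounded real random variable on a probability space with mean `0` and
second moment `1`. Then for every `u ∈ ℝ` and `t > 0`,
`(E[exp(u √(t/n) ξ)])ⁿ → exp(u² t / 2)` as `n → ∞`. -/
theorem stmt_8 {Ω : Type*} [MeasureSpace Ω] [IsProbabilityMeasure (volume : Measure Ω)]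
    (ξ : Ω → ℝ) (hmeas : Measurable ξ)
    (C : ℝ) (hbdd : ∀ᵐ ω, |ξ ω| ≤ C)
    (hmean : (∫ ω, ξ ω) = 0) (hvar : (∫ ω, (ξ ω)^2) = 1)
    (u t : ℝ) (ht : 0 < t) :
    Tendsto (fun n : ℕ => (∫ ω, Real.exp (u * Real.sqrt (t / n) * ξ ω))^n)
      atTop (nhds (Real.exp (u^2 * t / 2))) := by
  set D : ℝ := max C 1 with hDdef
  have hD1 : (1:ℝ) ≤ D := le_max_right _ _
  have hD0 : (0:ℝ) < D := lt_of_lt_of_le one_pos hD1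
  have hbddD : ∀ᵐ ω, |ξ ω| ≤ D := hbdd.mono fun ω h => le_trans h (le_max_left _ _)
  set a : ℕ → ℝ := fun n => u * Real.sqrt (t / n) with ha
  set E : ℕ → ℝ := fun n => ∫ ω, Real.exp (a n * ξ ω) with hE
  -- a n → 0
  have ha0 : Tendsto a atTop (nhds 0) := by
    have h1 : Tendsto (fun n : ℕ => t / n) atTop (nhds 0) :=
      tendsto_const_div_atTop_nhds_zero_nat t
    have h2 : Tendsto (fun n : ℕ => Real.sqrt (t / n)) atTop (nhds 0) := by
      have h2' := (Real.continuous_sqrt.tendsto 0).comp h1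
      rw [Real.sqrt_zero] at h2'
      exact h2'
    have h3 := h2.const_mul u
    rw [mul_zero] at h3
    exact h3
  -- square of a n
  have hasq : ∀ n : ℕ, (a n)^2 = u^2 * (t / n) := by
    intro n
    have h : (0:ℝ) ≤ t / n := div_nonneg ht.le (Nat.cast_nonneg n)
    show (u * Real.sqrt (t / n))^2 = u^2 * (t / n)
    rw [mul_pow, Real.sq_sqrt h]
  -- integrability
  have hintξ : Integrable ξ := by
    refine (integrable_const D).mono' hmeas.aestronglyMeasurable ?_
    filter_upwards [hbddD] with ω h using by rwa [Real.norm_eq_abs]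
  have hintξ2 : Integrable (fun ω => (ξ ω)^2) := by
    refine (integrable_const (D^2)).mono' ((hmeas.pow_const 2).aestronglyMeasurable) ?_
    filter_upwards [hbddD] with ω h
    rw [Real.norm_eq_abs, abs_pow]
    exact pow_le_pow_left₀ (abs_nonneg _) h 2
  have hintE : ∀ b : ℝ, Integrable (fun ω => Real.exp (b * ξ ω)) := by
    intro b
    refine (integrable_const (Real.exp (|b| * D))).mono'
      ((Real.measurable_exp.comp (measurable_const.mul hmeas)).aestronglyMeasurable) ?_
    filter_upwards [hbddD] with ω h
    rw [Real.norm_eq_abs, Real.abs_exp]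
    refine Real.exp_le_exp.2 (le_trans (le_abs_self _) ?_)
    rw [abs_mul]
    exact mul_le_mul_of_nonneg_left h (abs_nonneg b)
  -- key estimate
  have key : ∀ n : ℕ, |a n| * D ≤ 1 → |E n - (1 + (a n)^2/2)| ≤ |a n|^3 * D^3 := by
    intro n hn
    have hi1 : Integrable (fun ω => Real.exp (a n * ξ ω)) := hintE (a n)
    have hi2 : Integrable (fun ω => 1 + a n * ξ ω + ((a n)^2/2) * (ξ ω)^2) :=
      ((integrable_const 1).add (hintξ.const_mul (a n))).add (hintξ2.const_mul _)
    have hl2 : Integrable (fun ω : Ω => a n * ξ ω) := hintξ.const_mul (a n)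
    have hl3 : Integrable (fun ω : Ω => ((a n)^2/2) * (ξ ω)^2) := hintξ2.const_mul _
    have hl1 : Integrable (fun ω : Ω => 1 + a n * ξ ω) := (integrable_const 1).add hl2
    have heq : E n - (1 + (a n)^2/2)
        = ∫ ω, (Real.exp (a n * ξ ω) - (1 + a n * ξ ω + ((a n)^2/2) * (ξ ω)^2)) := by
      rw [integral_sub hi1 hi2, integral_add hl1 hl3, integral_add (integrable_const 1) hl2,
        integral_const_mul, integral_const_mul, hmean, hvar]
      simp [hE]
    rw [heq]
    have hb : ∀ᵐ ω, ‖Real.exp (a n * ξ ω) - (1 + a n * ξ ω + ((a n)^2/2) * (ξ ω)^2)‖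
        ≤ |a n|^3 * D^3 := by
      filter_upwards [hbddD] with ω h
      have hx : |a n * ξ ω| ≤ 1 := by
        rw [abs_mul]
        exact le_trans (mul_le_mul_of_nonneg_left h (abs_nonneg _)) hn
      have hb2 := Real.exp_bound hx (by norm_num : 0 < 3)
      have hsum : ∑ m ∈ Finset.range 3, (a n * ξ ω) ^ m / m.factorial
          = 1 + a n * ξ ω + ((a n)^2/2) * (ξ ω)^2 := by
        simp [Finset.sum_range_succ, Nat.factorial]
        ring
      rw [hsum] at hb2
      rw [Real.norm_eq_abs]
      have hs1 : |a n * ξ ω| ^ 3 * (((3:ℕ).succ : ℝ) / (((3:ℕ).factorial : ℝ) * 3)) ≤ |a n * ξ ω| ^ 3 := by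
        have h1 : (((3:ℕ).succ : ℝ) / (((3:ℕ).factorial : ℝ) * 3)) ≤ 1 := by
          norm_num [Nat.factorial]
        nlinarith [pow_nonneg (abs_nonneg (a n * ξ ω)) 3]
      have hs2 : |a n * ξ ω| ^ 3 ≤ |a n|^3 * D^3 := by
        calc |a n * ξ ω| ^ 3 = (|a n| * |ξ ω|)^3 := by rw [abs_mul]
          _ ≤ (|a n| * D)^3 := by
              refine pow_le_pow_left₀ (by positivity) ?_ 3
              exact mul_le_mul_of_nonneg_left h (abs_nonneg _)
          _ = |a n|^3 * D^3 := by ring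
      exact le_trans hb2 (le_trans hs1 hs2)
    calc |∫ ω, (Real.exp (a n * ξ ω) - (1 + a n * ξ ω + ((a n)^2/2) * (ξ ω)^2))|
        ≤ |a n|^3 * D^3 * (volume (Set.univ : Set Ω)).toReal :=
          norm_integral_le_of_norm_le_const hb
      _ = |a n|^3 * D^3 := by simp
  -- eventually the hypothesis of key holds
  have hevkey : ∀ᶠ n : ℕ in atTop, |a n| * D ≤ 1 := by
    have : Tendsto (fun n => |a n|) atTop (nhds 0) := by simpa using ha0.abs
    filter_upwards [this.eventually_lt_const (show (0:ℝ) < 1/D by positivity)] with n hn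
    calc |a n| * D ≤ (1/D) * D := mul_le_mul_of_nonneg_right hn.le hD0.le
      _ = 1 := by field_simp
  -- Step A : n * (E n - 1) → u^2 t / 2
  have hg0 : Tendsto (fun n : ℕ => (n:ℝ) * (E n - (1 + (a n)^2/2))) atTop (nhds 0) := by
    have hgtend : Tendsto (fun n : ℕ => (u^2 * t * D^3) * |a n|) atTop (nhds 0) := by
      have := (ha0.abs).const_mul (u^2 * t * D^3)
      simpa using this
    refine squeeze_zero_norm' ?_ hgtend
    · filter_upwards [hevkey, eventually_ge_atTop 1] with n hn hn1
      have hnpos : (0:ℝ) < n := by exact_mod_cast hn1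
      have h1 := key n hn
      have h2 : |a n|^3 = |a n| * (u^2 * (t/n)) := by
        rw [← hasq n, ← sq_abs]; ring
      rw [Real.norm_eq_abs, abs_mul, abs_of_nonneg hnpos.le]
      calc (n:ℝ) * |E n - (1 + (a n)^2/2)| ≤ (n:ℝ) * (|a n|^3 * D^3) := by
            exact mul_le_mul_of_nonneg_left h1 hnpos.le
        _ = (u^2 * t * D^3) * |a n| := by
            rw [h2]; field_simp
  have hA : Tendsto (fun n : ℕ => (n:ℝ) * (E n - 1)) atTop (nhds (u^2 * t / 2)) := by
    have h := hg0.const_add (u^2 * t / 2)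
    rw [add_zero] at h
    refine h.congr' ?_
    filter_upwards [eventually_ge_atTop 1] with n hn1
    have hnpos : (0:ℝ) < n := by exact_mod_cast hn1
    have : (n:ℝ) * ((a n)^2/2) = u^2 * t / 2 := by
      rw [hasq n]; field_simp
    nlinarith [this]
  -- Step B : E n → 1
  have hE1 : Tendsto E atTop (nhds 1) := by
    have h := hA.mul tendsto_one_div_atTop_nhds_zero_nat
    rw [mul_zero] at h
    have h2 : Tendsto (fun n : ℕ => E n - 1) atTop (nhds 0) := by
      refine h.congr' ?_
      filter_upwards [eventually_ge_atTop 1] with n hn1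
      have hnpos : (0:ℝ) < n := by exact_mod_cast hn1
      field_simp
    have := h2.const_add 1
    rw [add_zero] at this
    refine this.congr (fun n => by ring)
  -- Step C : n * log (E n) → u^2 t / 2
  have hevhalf : ∀ᶠ n : ℕ in atTop, |E n - 1| ≤ 1/2 := by
    have h2 : Tendsto (fun n => |E n - 1|) atTop (nhds 0) := by
      have := (hE1.sub_const 1).abs
      simpa using this
    exact h2.eventually_le_const (by norm_num)
  have hlogbound : ∀ n : ℕ, |E n - 1| ≤ 1/2 →
      |Real.log (E n) - (E n - 1)| ≤ 2 * (E n - 1)^2 := by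
    intro n hn
    set y := E n - 1 with hy
    have hylt : |y| < 1 := lt_of_le_of_lt hn (by norm_num)
    have h := Real.abs_log_sub_add_sum_range_le (x := -y) (by rwa [abs_neg]) 1
    have hsum : ∑ i ∈ Finset.range 1, (-y) ^ (i + 1) / ((i:ℝ) + 1) = -y := by simp
    rw [hsum, abs_neg] at h
    have h2 : (1 : ℝ) - -y = E n := by rw [hy]; ring
    rw [h2] at h
    have h3 : (-y) + Real.log (E n) = Real.log (E n) - y := by ring
    rw [h3] at h
    refine le_trans h ?_
    have hnum : |y| ^ (1+1) = y^2 := by rw [show (1+1)=2 from rfl, sq_abs]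
    rw [hnum, div_le_iff₀ (by linarith : (0:ℝ) < 1 - |y|)]
    nlinarith [sq_nonneg y, abs_nonneg y, mul_nonneg (sq_nonneg y) (abs_nonneg y)]
  have hC : Tendsto (fun n : ℕ => (n:ℝ) * Real.log (E n)) atTop (nhds (u^2 * t / 2)) := by
    have hrem : Tendsto (fun n : ℕ => (n:ℝ) * (Real.log (E n) - (E n - 1))) atTop (nhds 0) := by
      have hgtend : Tendsto (fun n : ℕ => 2 * |(n:ℝ) * (E n - 1)| * |E n - 1|) atTop (nhds 0) := by
        have h1 : Tendsto (fun n : ℕ => |(n:ℝ) * (E n - 1)|) atTop (nhds |u^2 * t / 2|) := hA.abs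
        have h2 : Tendsto (fun n : ℕ => |E n - 1|) atTop (nhds 0) := by
          have := (hE1.sub_const 1).abs; simpa using this
        have := (h1.const_mul 2).mul h2
        simpa using this
      refine squeeze_zero_norm' ?_ hgtend
      · filter_upwards [hevhalf] with n hn
        have h := hlogbound n hn
        rw [Real.norm_eq_abs, abs_mul]
        calc |(n:ℝ)| * |Real.log (E n) - (E n - 1)| ≤ |(n:ℝ)| * (2 * (E n - 1)^2) :=
              mul_le_mul_of_nonneg_left h (abs_nonneg _)
          _ = 2 * |(n:ℝ) * (E n - 1)| * |E n - 1| := by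
              rw [abs_mul, ← sq_abs (E n - 1)]; ring
    have h := hA.add hrem
    rw [add_zero] at h
    refine h.congr (fun n => by ring)
  -- conclusion
  have hexp := (Real.continuous_exp.tendsto _).comp hC
  refine hexp.congr' ?_
  have hevpos : ∀ᶠ n : ℕ in atTop, 0 < E n := by
    filter_upwards [hevhalf] with n hn
    have := abs_le.1 hn
    linarith [this.1]
  filter_upwards [hevpos] with n hn
  show Real.exp ((n:ℝ) * Real.log (E n)) = (E n)^n
  rw [Real.exp_nat_mul, Real.exp_log hn]
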